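/- Let p be a prime. For c ∈ ℤ_p define the power series (1+T)^c := Σ_{n≥0} b(c,n)·Tⁿ ∈ ℚ_p[[T]], where b(c,n) := (∏_{i=0}^{n−1}(c − i))/n! ∈ ℚ_p. Then: (1) for every c ∈ ℤ_p^× there exists a unique power series g_c ∈ ℤ_p[[T]] whose image in ℚ_p[[T]] satisfies T·((1+T)^c − 1)·g_c = ((1+T)^c − 1) − c·T (so that g_c represents 1/((1+T)−1) − c/((1+T)^c − 1)); and (2) the map ℤ_p^× → ℤ_p[[T]], c ↦ g_c, is continuous, where ℤ_p[[T]] carries the product topology of coefficientwise convergence. -/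

import Mathlib

/-- The power series `(1+T)^c = Σ_{n≥0} (c choose n) Tⁿ ∈ ℚ_p[[T]]` for `c ∈ ℤ_p`
(here given for any `c ∈ ℚ_p`), where `(c choose n) = (∏_{i=0}^{n−1}(c − i))/n!`. -/
noncomputable def onePlusTPow (p : ℕ) [Fact p.Prime] (c : ℚ_[p]) : PowerSeries ℚ_[p] :=
  PowerSeries.mk fun n => (∏ i ∈ Finset.range n, (c - (i : ℚ_[p]))) / (Nat.factorial n : ℚ_[p])

open Finset PowerSeries

variable {p : ℕ} [Fact p.Prime]

lemma ascPochhammer_eval_prod (R : Type*) [CommSemiring R] (n : ℕ) (x : R) :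
    (ascPochhammer R n).eval x = ∏ i ∈ Finset.range n, (x + i) := by
  induction n with
  | zero => simp
  | succ n ih =>
      rw [ascPochhammer_succ_right, Finset.prod_range_succ, ← ih]
      simp [mul_comm]

lemma coe_ringChoose (c : ℤ_[p]) (n : ℕ) :
    ((Ring.choose c n : ℤ_[p]) : ℚ_[p])
      = (∏ i ∈ Finset.range n, ((c : ℚ_[p]) - i)) / (n.factorial : ℚ_[p]) := by
  rw [eq_div_iff (by exact_mod_cast n.factorial_ne_zero)]
  have h := Ring.descPochhammer_eq_factorial_smul_choose c n
  rw [Polynomial.descPochhammer_smeval_eq_ascPochhammer,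
    Polynomial.ascPochhammer_smeval_eq_eval] at h
  have hc : (((c - n + 1 : ℤ_[p])) : ℚ_[p]) = (c : ℚ_[p]) - n + 1 := by push_cast; ring
  have h2 : ((((ascPochhammer ℤ_[p] n).eval (c - n + 1) : ℤ_[p])) : ℚ_[p])
      = (ascPochhammer ℚ_[p] n).eval ((c : ℚ_[p]) - n + 1) := by
    rw [← hc, ← ascPochhammer_map (PadicInt.Coe.ringHom (p := p)) n, Polynomial.eval_map]
    exact (Polynomial.eval₂_at_apply (PadicInt.Coe.ringHom (p := p)) (c - n + 1)).symm
  have h3 : (ascPochhammer ℚ_[p] n).eval ((c : ℚ_[p]) - n + 1)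
      = ∏ i ∈ Finset.range n, ((c : ℚ_[p]) - i) := by
    rw [ascPochhammer_eval_prod, ← Finset.prod_range_reflect]
    refine Finset.prod_congr rfl fun i hi => ?_
    rw [Finset.mem_range] at hi
    have : ((n - 1 - i : ℕ) : ℚ_[p]) = (n : ℚ_[p]) - 1 - i := by
      have h4 : n - 1 - i = n - (1 + i) := by omega
      rw [h4, Nat.cast_sub (by omega)]
      push_cast; ring
    rw [this]; ring
  rw [← h3, ← h2, h]
  push_cast [nsmul_eq_mul]
  ring

noncomputable def G (c : ℤ_[p]ˣ) : ℕ → ℤ_[p]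
  | m => (↑c⁻¹ : ℤ_[p]) * (Ring.choose (c : ℤ_[p]) (m + 2)
      - ∑ j ∈ (Finset.range m).attach,
          Ring.choose (c : ℤ_[p]) (m + 1 - j.1) * G c j.1)
  decreasing_by exact Finset.mem_range.mp j.2

lemma G_eq (c : ℤ_[p]ˣ) (m : ℕ) :
    G c m = (↑c⁻¹ : ℤ_[p]) * (Ring.choose (c : ℤ_[p]) (m + 2)
      - ∑ j ∈ Finset.range m, Ring.choose (c : ℤ_[p]) (m + 1 - j) * G c j) := by
  rw [G]
  congr 2
  exact Finset.sum_attach (Finset.range m) (fun j => Ring.choose (c : ℤ_[p]) (m + 1 - j) * G c j)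

lemma G_key (c : ℤ_[p]ˣ) (m : ℕ) :
    ∑ j ∈ Finset.range (m + 1), Ring.choose (c : ℤ_[p]) (m + 1 - j) * G c j
      = Ring.choose (c : ℤ_[p]) (m + 2) := by
  rw [Finset.sum_range_succ]
  have h1 : m + 1 - m = 1 := by omega
  rw [h1, Ring.choose_one_right, G_eq c m, ← mul_assoc, Units.mul_inv, one_mul]
  ring

lemma continuous_G (m : ℕ) : Continuous fun c : ℤ_[p]ˣ => G c m := by
  induction m using Nat.strong_induction_on with
  | _ m ih =>
    have hfe : (fun c : ℤ_[p]ˣ => G c m)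
        = fun c : ℤ_[p]ˣ => (↑c⁻¹ : ℤ_[p]) * (Ring.choose (c : ℤ_[p]) (m + 2)
            - ∑ j ∈ Finset.range m, Ring.choose (c : ℤ_[p]) (m + 1 - j) * G c j) :=
      funext fun c => G_eq c m
    rw [hfe]
    refine Continuous.mul Units.continuous_coe_inv (Continuous.sub ?_ ?_)
    · exact (PadicInt.continuous_choose _).comp Units.continuous_val
    · exact continuous_finset_sum _ fun j hj =>
        (((PadicInt.continuous_choose _).comp Units.continuous_val).mul
          (ih j (Finset.mem_range.mp hj)))

noncomputable def hseries (c : ℤ_[p]) : PowerSeries ℚ_[p] :=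
  PowerSeries.mk fun n => ((Ring.choose c (n + 1) : ℤ_[p]) : ℚ_[p])

lemma coeff_onePlusTPow (c : ℤ_[p]) (n : ℕ) :
    PowerSeries.coeff n (onePlusTPow p (c : ℚ_[p]))
      = ((Ring.choose c n : ℤ_[p]) : ℚ_[p]) := by
  rw [onePlusTPow, coeff_mk, coe_ringChoose]

lemma onePlusTPow_sub_one (c : ℤ_[p]) :
    onePlusTPow p (c : ℚ_[p]) - 1 = X * hseries c := by
  ext n
  cases n with
  | zero =>
      rw [map_sub, coeff_onePlusTPow, Ring.choose_zero_right]
      simp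
  | succ n =>
      rw [coeff_succ_X_mul]
      simp [coeff_onePlusTPow, hseries, PowerSeries.coeff_one, Nat.succ_ne_zero]

lemma main_eq (c : ℤ_[p]ˣ) :
    PowerSeries.X * (onePlusTPow p (((c : ℤ_[p]) : ℚ_[p])) - 1) *
        (PowerSeries.map (PadicInt.Coe.ringHom (p := p)) (PowerSeries.mk (G c)))
      = (onePlusTPow p (((c : ℤ_[p]) : ℚ_[p])) - 1) -
          PowerSeries.C (((c : ℤ_[p]) : ℚ_[p])) * PowerSeries.X := by
  set g' := PowerSeries.map (PadicInt.Coe.ringHom (p := p)) (PowerSeries.mk (G c)) with hg'def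
  have hg' : ∀ n, PowerSeries.coeff n g' = ((G c n : ℤ_[p]) : ℚ_[p]) := by
    intro n
    rw [hg'def, PowerSeries.coeff_map, coeff_mk]
    rfl
  rw [onePlusTPow_sub_one]
  have hassoc : X * (X * hseries ((c : ℤ_[p]))) * g'
      = X * (X * (hseries ((c : ℤ_[p])) * g')) := by ring
  rw [hassoc]
  ext n
  match n with
  | 0 => simp
  | 1 =>
      rw [show (1 : ℕ) = 0 + 1 from rfl, coeff_succ_X_mul]
      simp [hseries, Ring.choose_one_right]
  | (k + 2) =>
      rw [show k + 2 = (k + 1) + 1 from rfl, coeff_succ_X_mul, coeff_succ_X_mul,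
        PowerSeries.coeff_mul, Finset.Nat.sum_antidiagonal_eq_sum_range_succ_mk]
      have hZ : ∑ i ∈ Finset.range (k + 1), Ring.choose (c : ℤ_[p]) (i + 1) * G c (k - i)
          = Ring.choose (c : ℤ_[p]) (k + 2) := by
        rw [← G_key c k,
          ← Finset.sum_range_reflect (fun j => Ring.choose (c : ℤ_[p]) (k + 1 - j) * G c j) (k + 1)]
        refine Finset.sum_congr rfl fun i hi => ?_
        rw [Finset.mem_range] at hi
        have h1 : k + 1 - 1 - i = k - i := by omega
        have h2 : k + 1 - (k - i) = i + 1 := by omega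
        rw [h1, h2]
      have hL : ∑ i ∈ Finset.range (k + 1),
            PowerSeries.coeff i (hseries ((c : ℤ_[p]))) * PowerSeries.coeff (k - i) g'
          = ((Ring.choose ((c : ℤ_[p])) (k + 2) : ℤ_[p]) : ℚ_[p]) := by
        rw [← hZ]
        rw [show (((∑ i ∈ Finset.range (k + 1), Ring.choose (c : ℤ_[p]) (i + 1) * G c (k - i) : ℤ_[p])) : ℚ_[p])
            = ∑ i ∈ Finset.range (k + 1), (((Ring.choose (c : ℤ_[p]) (i + 1) * G c (k - i) : ℤ_[p])) : ℚ_[p])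
          from map_sum (PadicInt.Coe.ringHom (p := p)) _ _]
        refine Finset.sum_congr rfl fun i hi => ?_
        rw [hseries, coeff_mk, hg', PadicInt.coe_mul]
      rw [hL]
      simp [hseries, PowerSeries.coeff_X]

/-- For every unit `c ∈ ℤ_p^×` there is a unique `g_c ∈ ℤ_p[[T]]` representing
`1/((1+T)−1) − c/((1+T)^c − 1)` (in the sense that
`T·((1+T)^c − 1)·g_c = ((1+T)^c − 1) − c·T` in `ℚ_p[[T]]`), and `c ↦ g_c` is continuous
for the topology of coefficientwise convergence on `ℤ_p[[T]]`. -/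
theorem exists_unique_gc_and_continuous (p : ℕ) [Fact p.Prime] :
    (∀ c : ℤ_[p]ˣ, ∃! g : PowerSeries ℤ_[p],
        PowerSeries.X * (onePlusTPow p (((c : ℤ_[p]) : ℚ_[p])) - 1) *
            (PowerSeries.map (PadicInt.Coe.ringHom (p := p)) g)
          = (onePlusTPow p (((c : ℤ_[p]) : ℚ_[p])) - 1) -
              PowerSeries.C (((c : ℤ_[p]) : ℚ_[p])) * PowerSeries.X) ∧
    ∃ g : ℤ_[p]ˣ → PowerSeries ℤ_[p],
      (∀ c : ℤ_[p]ˣ,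
        PowerSeries.X * (onePlusTPow p (((c : ℤ_[p]) : ℚ_[p])) - 1) *
            (PowerSeries.map (PadicInt.Coe.ringHom (p := p)) (g c))
          = (onePlusTPow p (((c : ℤ_[p]) : ℚ_[p])) - 1) -
              PowerSeries.C (((c : ℤ_[p]) : ℚ_[p])) * PowerSeries.X) ∧
      ∀ n : ℕ, Continuous fun c : ℤ_[p]ˣ => PowerSeries.coeff n (g c) := by
  constructor
  · intro c
    refine ⟨PowerSeries.mk (G c), main_eq c, fun y hy => ?_⟩
    have hXf : PowerSeries.X * (onePlusTPow p (((c : ℤ_[p]) : ℚ_[p])) - 1) ≠ 0 := by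
      refine mul_ne_zero PowerSeries.X_ne_zero fun h => ?_
      have h1 := congrArg (PowerSeries.coeff 1) h
      rw [map_sub, coeff_onePlusTPow, Ring.choose_one_right] at h1
      simp [PowerSeries.coeff_one] at h1
    have h2 : PowerSeries.map (PadicInt.Coe.ringHom (p := p)) y
        = PowerSeries.map (PadicInt.Coe.ringHom (p := p)) (PowerSeries.mk (G c)) :=
      mul_left_cancel₀ hXf (hy.trans (main_eq c).symm)
    ext n
    have h3 := congrArg (PowerSeries.coeff n) h2
    rw [PowerSeries.coeff_map, PowerSeries.coeff_map] at h3
    exact Subtype.coe_inj.mp h3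
  · refine ⟨fun c => PowerSeries.mk (G c), fun c => main_eq c, fun n => ?_⟩
    simp only [coeff_mk]
    exact continuous_G n
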